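/- Let (P, ≤) be a finite poset with elements s_1, …, s_n, K a field, and H an n×n matrix over K belonging to the incidence algebra of P with H_{ii} = 1 for all i. Set A = 2I − H (so A_{ii} = 1 and A_{ij} = −H_{ij} for i ≠ j). Let π = π_1π_2⋯π_n be a permutation of {1, …, n} such that its reversal π_n π_{n−1} ⋯ π_1 is a linear extension of P; equivalently, whenever s_i < s_j in P, the index i appears strictly after j in π. Then H is invertible and F_{π_n}(A)·F_{π_{n−1}}(A)⋯F_{π_1}(A) = H^{−1}; that is, H^{−1} is the map of a linear SDS. -/

import Mathlib

open Matrix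

/-- `sdsF A i` is the matrix that agrees with the identity matrix in every row except
row `i`, whose `i`-th row equals the `i`-th row of `A`. -/
def sdsF {K : Type*} [Field K] {n : ℕ} (A : Matrix (Fin n) (Fin n) K) (i : Fin n) :
    Matrix (Fin n) (Fin n) K :=
  Matrix.of fun k j => if k = i then A k j else if k = j then 1 else 0

/-- The map of the linear SDS with local matrix `A` and permutation update schedule `π`:
the product `F_{π_n}(A) · F_{π_{n-1}}(A) ⋯ F_{π_1}(A)`. -/
def sdsMap {K : Type*} [Field K] {n : ℕ} (A : Matrix (Fin n) (Fin n) K)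
    (π : Equiv.Perm (Fin n)) : Matrix (Fin n) (Fin n) K :=
  (((List.finRange n).reverse).map fun k => sdsF A (π k)).prod

lemma two_apply' {K : Type*} [Field K] {n : ℕ} (i j : Fin n) :
    (2 : Matrix (Fin n) (Fin n) K) i j = if i = j then 2 else 0 := by
  rw [show (2:Matrix (Fin n) (Fin n) K) = 1 + 1 by norm_num]
  by_cases h : i = j <;> simp [Matrix.add_apply, Matrix.one_apply, h] <;> norm_num

lemma sdsF_mul_apply {K : Type*} [Field K] {n : ℕ} (A M : Matrix (Fin n) (Fin n) K)
    (c i j : Fin n) :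
    (sdsF A c * M) i j = if i = c then ∑ k, A i k * M k j else M i j := by
  rw [Matrix.mul_apply]
  by_cases h : i = c
  · simp [sdsF, h]
  · simp [sdsF, h, Matrix.one_apply]

def sdsPartial {K : Type*} [Field K] {n : ℕ} (A : Matrix (Fin n) (Fin n) K)
    (π : Equiv.Perm (Fin n)) (m : ℕ) : Matrix (Fin n) (Fin n) K :=
  (List.map (fun k => sdsF A (π k)) (((List.finRange n).take m).reverse)).prod

lemma sds_partial {K : Type*} [Field K] {n : ℕ}
    (r : Fin n → Fin n → Prop)
    (H : Matrix (Fin n) (Fin n) K)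
    (hH0 : ∀ i j, ¬ r i j → H i j = 0)
    (hH1 : ∀ i, H i i = 1)
    (π : Equiv.Perm (Fin n))
    (hπ : ∀ i j, r i j → i ≠ j → π.symm j < π.symm i) :
    ∀ m, m ≤ n → ∀ i j : Fin n,
      (sdsPartial ((2 : Matrix (Fin n) (Fin n) K) - H) π m * H) i j
        = if (π.symm i : ℕ) < m then (if i = j then (1:K) else 0) else H i j := by
  have hA : ∀ c k : Fin n, (2 - H : Matrix (Fin n) (Fin n) K) c k
      = if c = k then 1 else -H c k := by
    intro c k
    rw [Matrix.sub_apply, two_apply']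
    by_cases h : c = k
    · rw [if_pos h, if_pos h, h, hH1]; norm_num
    · rw [if_neg h, if_neg h, zero_sub]
  intro m
  induction m with
  | zero => intro _ i j; simp [sdsPartial]
  | succ m ih =>
    intro hm i j
    have hm' : m < n := hm
    have hmn : m ≤ n := le_of_lt hm'
    have htake : (List.finRange n).take (m+1)
        = (List.finRange n).take m ++ [⟨m, hm'⟩] := by
      rw [List.take_succ]
      have : (List.finRange n)[m]? = some ⟨m, hm'⟩ := by
        rw [List.getElem?_eq_getElem (by simpa using hm')]
        simp [List.getElem_finRange, Fin.cast]
      rw [this]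
      rfl
    have hstep : sdsPartial ((2 : Matrix (Fin n) (Fin n) K) - H) π (m+1)
        = sdsF ((2 : Matrix (Fin n) (Fin n) K) - H) (π ⟨m, hm'⟩)
          * sdsPartial ((2 : Matrix (Fin n) (Fin n) K) - H) π m := by
      rw [sdsPartial, htake, List.reverse_append]
      simp only [List.reverse_singleton, List.singleton_append, List.map_cons, List.prod_cons]
      rfl
    have hMval : ∀ k j' : Fin n,
        (sdsPartial ((2 : Matrix (Fin n) (Fin n) K) - H) π m * H) k j'
          = if (π.symm k : ℕ) < m then (if k = j' then (1:K) else 0) else H k j' := ih hmn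
    rw [hstep, Matrix.mul_assoc, sdsF_mul_apply]
    by_cases hic : i = π ⟨m, hm'⟩
    · rw [if_pos hic]
      have hsi : ((π.symm i : Fin n) : ℕ) = m := by
        rw [hic, Equiv.symm_apply_apply]
      rw [if_pos (by rw [hsi]; exact Nat.lt_succ_self m)]
      have hMc : ∀ j' : Fin n,
          (sdsPartial ((2 : Matrix (Fin n) (Fin n) K) - H) π m * H) i j' = H i j' := by
        intro j'
        rw [hMval, if_neg (by rw [hsi]; exact lt_irrefl m)]
      have hlt' : ∀ k : Fin n, r i k → k ≠ i → ((π.symm k : Fin n) : ℕ) < m := by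
        intro k hrk hk
        have := hπ i k hrk (Ne.symm hk)
        rw [Fin.lt_def, hsi] at this
        exact this
      by_cases hj : i = j
      · rw [if_pos hj, ← hj]
        rw [Finset.sum_eq_single i]
        · rw [hA, if_pos rfl, one_mul, hMc, hH1]
        · intro k _ hk
          by_cases hrk : r i k
          · rw [hMval, if_pos (hlt' k hrk hk), if_neg hk, mul_zero]
          · rw [hA, if_neg (Ne.symm hk), hH0 i k hrk, neg_zero, zero_mul]
        · intro h; exact absurd (Finset.mem_univ i) h
      · rw [if_neg hj]
        have key : ∀ k : Fin n, (2 - H : Matrix (Fin n) (Fin n) K) i k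
              * (sdsPartial ((2 : Matrix (Fin n) (Fin n) K) - H) π m * H) k j
            = (if k = i then H i j else 0) + (if k = j then -H i j else 0) := by
          intro k
          by_cases hki : k = i
          · rw [hki, hA, if_pos rfl, one_mul, hMc, if_pos rfl, if_neg hj, add_zero]
          · rw [if_neg hki]
            by_cases hkj : k = j
            · rw [if_pos hkj, zero_add]
              by_cases hrk : r i k
              · rw [hMval, if_pos (hlt' k hrk hki), if_pos hkj,
                  hA, if_neg (fun h => hki h.symm), mul_one, hkj]
              · rw [hA, if_neg (fun h => hki h.symm), hH0 i k hrk, ← hkj,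
                  hH0 i k hrk, neg_zero, zero_mul]
            · rw [if_neg hkj, add_zero]
              by_cases hrk : r i k
              · rw [hMval, if_pos (hlt' k hrk hki), if_neg hkj, mul_zero]
              · rw [hA, if_neg (fun h => hki h.symm), hH0 i k hrk, neg_zero, zero_mul]
        rw [Finset.sum_congr rfl (fun k _ => key k), Finset.sum_add_distrib]
        simp [Finset.sum_ite_eq', hj]
    · rw [if_neg hic, hMval]
      have hne : ((π.symm i : Fin n) : ℕ) ≠ m := by
        intro h
        apply hic
        have h2 : π.symm i = ⟨m, hm'⟩ := Fin.ext h
        rw [← h2, Equiv.apply_symm_apply]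
      by_cases hlt : ((π.symm i : Fin n) : ℕ) < m
      · rw [if_pos hlt, if_pos (Nat.lt_succ_of_lt hlt)]
      · rw [if_neg hlt, if_neg (fun h => (Nat.lt_succ_iff_lt_or_eq.mp h).elim hlt hne)]

theorem moebius_inverse_as_linear_sds {K : Type*} [Field K] {n : ℕ} (hn : 0 < n)
    (r : Fin n → Fin n → Prop) (hr : IsPartialOrder (Fin n) r)
    (H : Matrix (Fin n) (Fin n) K)
    (hH0 : ∀ i j : Fin n, ¬ r i j → H i j = 0)
    (hH1 : ∀ i : Fin n, H i i = 1)
    (π : Equiv.Perm (Fin n))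
    (hπ : ∀ i j : Fin n, r i j → i ≠ j → π.symm j < π.symm i) :
    IsUnit H ∧ sdsMap ((2 : Matrix (Fin n) (Fin n) K) - H) π = H⁻¹ := by
  have key := sds_partial r H hH0 hH1 π hπ n le_rfl
  have hfull : (List.finRange n).take n = List.finRange n := by
    apply List.take_of_length_le; simp
  have hsd : sdsMap ((2 : Matrix (Fin n) (Fin n) K) - H) π
      = sdsPartial ((2 : Matrix (Fin n) (Fin n) K) - H) π n := by
    rw [sdsMap, sdsPartial, hfull]
  have hmul : sdsMap ((2 : Matrix (Fin n) (Fin n) K) - H) π * H = 1 := by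
    ext i j
    rw [hsd, key i j, if_pos (π.symm i).is_lt, Matrix.one_apply]
  exact ⟨(Matrix.isUnit_iff_isUnit_det H).mpr (Matrix.isUnit_det_of_left_inverse hmul), (Matrix.inv_eq_left_inv hmul).symm⟩
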